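/- (Okunev) If X is a locally compact Hausdorff space and Y a Tychonoff space, then t_m(X × Y) ≤ t_m(X)·t_m(Y), where t_m denotes minitightness (the least infinite κ such that every strictly κ-continuous real-valued function is continuous). -/

import Mathlib

open Cardinal Set

/-- The minitightness of a space: the least infinite cardinal κ such that every
strictly κ-continuous real-valued function is continuous. -/
noncomputable def minitightness (X : Type u) [TopologicalSpace X] : Cardinal.{u} :=
  sInf {κ : Cardinal.{u} | Cardinal.aleph0 ≤ κ ∧
    ∀ f : X → ℝ,
      (∀ A : Set X, #A ≤ κ → ∃ g : X → ℝ, Continuous g ∧ ∀ x ∈ A, g x = f x) →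
      Continuous f}

/-- The defining set of cardinals for minitightness. -/
def minitightnessSet (Z : Type u) [TopologicalSpace Z] : Set Cardinal.{u} :=
  {κ : Cardinal.{u} | Cardinal.aleph0 ≤ κ ∧
    ∀ f : Z → ℝ,
      (∀ A : Set Z, #A ≤ κ → ∃ g : Z → ℝ, Continuous g ∧ ∀ x ∈ A, g x = f x) →
      Continuous f}

lemma minitightness_eq (Z : Type u) [TopologicalSpace Z] :
    minitightness Z = sInf (minitightnessSet Z) := rfl

lemma minitightnessSet_nonempty (Z : Type u) [TopologicalSpace Z] :
    (minitightnessSet Z).Nonempty := by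
  refine ⟨max Cardinal.aleph0 #Z, le_max_left _ _, ?_⟩
  intro f hf
  obtain ⟨g, hg, hagree⟩ := hf Set.univ (by rw [Cardinal.mk_univ]; exact le_max_right _ _)
  have : f = g := funext fun x => (hagree x trivial).symm
  rwa [this]

lemma minitightness_mem (Z : Type u) [TopologicalSpace Z] :
    minitightness Z ∈ minitightnessSet Z :=
  csInf_mem (minitightnessSet_nonempty Z)

lemma minitightnessSet_upward {Z : Type u} [TopologicalSpace Z] {κ κ' : Cardinal.{u}}
    (h : κ ∈ minitightnessSet Z) (hle : κ ≤ κ') : κ' ∈ minitightnessSet Z :=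
  ⟨h.1.trans hle, fun f hf => h.2 f fun A hA => hf A (hA.trans hle)⟩

/-- Continuity of a parametrized sup of absolute values over a compact set. -/
lemma continuous_sSup_abs_image {X Z : Type*} [TopologicalSpace X] [TopologicalSpace Z]
    {L : Set X} (hL : IsCompact L) {F : X × Z → ℝ} (hF : Continuous F) :
    Continuous fun z => sSup ((fun x => |F (x, z)|) '' L) := by
  haveI : CompactSpace ↥L := isCompact_iff_compactSpace.mp hL
  let Fc : C(Z × ↥L, ℝ) := ⟨fun p => F (p.2.1, p.1), hF.comp (by fun_prop)⟩
  have key : ∀ z, sSup ((fun x => |F (x, z)|) '' L) = ‖Fc.curry z‖ := by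
    intro z
    rw [ContinuousMap.norm_eq_iSup_norm]
    have : (fun x => |F (x, z)|) '' L = Set.range fun x : ↥L => |F ((x : X), z)| := by
      rw [Set.image_eq_range]
    rw [this, sSup_range]
    simp [Fc, ContinuousMap.curry_apply, Real.norm_eq_abs]
  have : Continuous fun z => ‖Fc.curry z‖ :=
    continuous_norm.comp Fc.curry.continuous
  simpa [funext key] using this

theorem minitightness_prod_le
    {X Y : Type u} [TopologicalSpace X] [TopologicalSpace Y]
    [LocallyCompactSpace X] [T2Space X] [T35Space Y] :
    minitightness (X × Y) ≤ max (minitightness X) (minitightness Y) := by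
  set κ := max (minitightness X) (minitightness Y) with hκdef
  have hX : κ ∈ minitightnessSet X :=
    minitightnessSet_upward (minitightness_mem X) (le_max_left _ _)
  have hY : κ ∈ minitightnessSet Y :=
    minitightnessSet_upward (minitightness_mem Y) (le_max_right _ _)
  have hκinf : Cardinal.aleph0 ≤ κ := hX.1
  rw [minitightness_eq]
  refine csInf_le' ⟨hκinf, ?_⟩
  intro f hf
  -- Step 1: all X-slices of f are continuous.
  have hslice : ∀ y : Y, Continuous fun x => f (x, y) := by
    intro y
    apply hX.2
    intro A hA
    obtain ⟨g, hg, hag⟩ := hf ((fun x => (x, y)) '' A) (Cardinal.mk_image_le.trans hA)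
    exact ⟨fun x => g (x, y), hg.comp (by fun_prop),
      fun x hx => hag (x, y) (Set.mem_image_of_mem _ hx)⟩
  rw [continuous_iff_continuousAt]
  rintro ⟨a, b⟩
  obtain ⟨K, hKc, hKn⟩ := exists_compact_mem_nhds a
  have haK : a ∈ K := mem_of_mem_nhds hKn
  have hKne : K.Nonempty := ⟨a, haK⟩
  set hu : Y → ℝ := fun y => sSup ((fun x => |f (x, y) - f (x, b)|) '' K) with hu_def
  have hφcont : ∀ y : Y, Continuous fun x => |f (x, y) - f (x, b)| := fun y =>
    ((hslice y).sub (hslice b)).abs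
  have hbddK : ∀ y : Y, BddAbove ((fun x => |f (x, y) - f (x, b)|) '' K) := fun y =>
    hKc.bddAbove_image (hφcont y).continuousOn
  -- Step 2: hu is strictly κ-continuous on Y, hence continuous.
  have hucont : Continuous hu := by
    apply hY.2
    intro B₀ hB₀
    set B : Set Y := insert b B₀ with hB_def
    have hone : (1 : Cardinal.{u}) ≤ κ := le_trans Cardinal.one_le_aleph0 hκinf
    have hBκ : #B ≤ κ := by
      refine Cardinal.mk_insert_le.trans ?_
      calc #B₀ + 1 ≤ κ + κ := add_le_add hB₀ hone
        _ = κ := Cardinal.add_eq_self hκinf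
    -- choose a maximizer of x ↦ |f (x,y) - f (x,b)| on K, for each y
    have hmax : ∀ y : Y, ∃ x ∈ K, ∀ x' ∈ K,
        |f (x', y) - f (x', b)| ≤ |f (x, y) - f (x, b)| := by
      intro y
      obtain ⟨x, hxK, hx⟩ := hKc.exists_isMaxOn hKne (hφcont y).continuousOn
      exact ⟨x, hxK, fun x' hx' => hx hx'⟩
    choose xsel hxselK hxselmax using hmax
    set D : Set X := insert a (xsel '' B) with hD_def
    have hDK : D ⊆ K := Set.insert_subset haK
      (Set.image_subset_iff.2 fun y _ => hxselK y)
    have hDκ : #D ≤ κ := by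
      refine Cardinal.mk_insert_le.trans ?_
      calc #(xsel '' B) + 1 ≤ κ + κ := add_le_add (Cardinal.mk_image_le.trans hBκ) hone
        _ = κ := Cardinal.add_eq_self hκinf
    have hAκ : #(D ×ˢ B : Set (X × Y)) ≤ κ := by
      have : #(D ×ˢ B : Set (X × Y)) = #D * #B := by
        rw [Cardinal.mk_congr (Equiv.Set.prod D B), Cardinal.mk_prod,
          Cardinal.lift_id, Cardinal.lift_id]
      rw [this]
      calc #D * #B ≤ κ * κ := mul_le_mul' hDκ hBκ
        _ = κ := Cardinal.mul_eq_self hκinf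
    obtain ⟨g, hg, hag⟩ := hf (D ×ˢ B) hAκ
    set L : Set X := closure D with hL_def
    have hLK : L ⊆ K := hKc.isClosed.closure_subset_iff.2 hDK
    have hLcomp : IsCompact L := hKc.of_isClosed_subset isClosed_closure hLK
    refine ⟨fun y => sSup ((fun x => |g (x, y) - f (x, b)|) '' L), ?_, ?_⟩
    · exact continuous_sSup_abs_image hLcomp (F := fun p : X × Y => g p - f (p.1, b))
        (hg.sub ((hslice b).comp continuous_fst))
    · intro y hy
      have hyB : y ∈ B := Set.mem_insert_of_mem _ hy
      -- g(·,y) and f(·,y) agree on L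
      have heq : Set.EqOn (fun x => g (x, y)) (fun x => f (x, y)) L := by
        refine Set.EqOn.closure ?_ (hg.comp (by fun_prop)) (hslice y)
        intro x hx
        exact hag (x, y) (Set.mk_mem_prod hx hyB)
      have himg : (fun x => |g (x, y) - f (x, b)|) '' L
          = (fun x => |f (x, y) - f (x, b)|) '' L :=
        Set.image_congr fun x hx => by simp only [heq hx]
      show sSup ((fun x => |g (x, y) - f (x, b)|) '' L) = hu y
      rw [himg]
      have hLne : L.Nonempty := ⟨a, subset_closure (Set.mem_insert _ _)⟩
      have hsub : (fun x => |f (x, y) - f (x, b)|) '' L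
          ⊆ (fun x => |f (x, y) - f (x, b)|) '' K := Set.image_mono hLK
      refine le_antisymm (csSup_le_csSup (hbddK y) (hLne.image _) hsub) ?_
      have hxL : xsel y ∈ L := subset_closure
        (Set.mem_insert_of_mem _ (Set.mem_image_of_mem xsel hyB))
      have h1 : hu y ≤ |f (xsel y, y) - f (xsel y, b)| := by
        refine csSup_le (hKne.image _) ?_
        rintro z ⟨x, hx, rfl⟩
        exact hxselmax y x hx
      exact h1.trans (le_csSup ((hbddK y).mono hsub) (Set.mem_image_of_mem _ hxL))
  -- Step 3: hu b = 0 and the squeeze.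
  have hub : hu b = 0 := by
    have himg : (fun x => |f (x, b) - f (x, b)|) '' K = (fun _ => (0 : ℝ)) '' K := by
      apply Set.image_congr
      intro x _
      simp
    rw [hu_def]
    simp only [himg]
    rw [Set.Nonempty.image_const hKne, csSup_singleton]
  have hbound : ∀ x ∈ K, ∀ y : Y, |f (x, y) - f (x, b)| ≤ hu y := fun x hx y =>
    le_csSup (hbddK y) (Set.mem_image_of_mem _ hx)
  have hlo : Filter.Tendsto (fun p : X × Y => f (p.1, b) - hu p.2)
      (nhds (a, b)) (nhds (f (a, b))) := by
    have hc : Continuous fun p : X × Y => f (p.1, b) - hu p.2 :=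
      ((hslice b).comp continuous_fst).sub (hucont.comp continuous_snd)
    have := hc.tendsto (a, b)
    simpa [hub] using this
  have hhi : Filter.Tendsto (fun p : X × Y => f (p.1, b) + hu p.2)
      (nhds (a, b)) (nhds (f (a, b))) := by
    have hc : Continuous fun p : X × Y => f (p.1, b) + hu p.2 :=
      ((hslice b).comp continuous_fst).add (hucont.comp continuous_snd)
    have := hc.tendsto (a, b)
    simpa [hub] using this
  have hev : ∀ᶠ p : X × Y in nhds (a, b), p.1 ∈ K :=
    continuousAt_fst.preimage_mem_nhds hKn
  have goal : Filter.Tendsto f (nhds (a, b)) (nhds (f (a, b))) := by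
    refine tendsto_of_tendsto_of_tendsto_of_le_of_le' hlo hhi ?_ ?_
    · refine hev.mono fun p hp => ?_
      have := hbound p.1 hp p.2
      have habs := abs_le.1 this
      have : f (p.1, p.2) = f p := by simp
      linarith [habs.1, habs.2]
    · refine hev.mono fun p hp => ?_
      have := hbound p.1 hp p.2
      have habs := abs_le.1 this
      have : f (p.1, p.2) = f p := by simp
      linarith [habs.1, habs.2]
  exact goal
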